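/- arXiv:0903.3753 — 2 statements merged into one kernel-verified Lean document; each statement's English description precedes it below -/
import Mathlib

section
/- There exists a constant C > 0 such that for all integers n ≥ 2, Σ_{k=1}^{n−1} k · α_k(n−k−1) ≤ C · 2^n · log n / n (logarithm natural). -/
/-- All binary words of length `n` (`false` = 0, `true` = 1), listed in lexicographic order. -/
def allWords : ℕ → List (List Bool)
  | 0 => [[]]
  | n + 1 => (allWords n).flatMap (fun w => [w ++ [false], w ++ [true]])

/-- The skew of a binary word: number of 0s minus number of 1s. -/
def skew (w : List Bool) : ℤ := (w.map (fun b => if b then (-1 : ℤ) else 1)).sum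

/-- The discrepancy of a binary word: the maximum over all (nonempty) initial
segments of the absolute difference between the number of 0s and of 1s. -/
def disc (w : List Bool) : ℤ :=
  ((List.range w.length).map (fun M => |skew (w.take (M + 1))|)).foldr max 0

/-- `w` contains a run of `k` consecutive 0s. -/
def hasZeroRun (k : ℕ) (w : List Bool) : Prop := List.replicate k false <:+: w

instance (k : ℕ) : DecidablePred (hasZeroRun k) := fun _ => inferInstanceAs (Decidable (_ <:+: _))

/-- Number of binary words of length `n` containing no run of `k` consecutive 0s. -/
def alpha (k n : ℕ) : ℕ := ((allWords n).filter (fun w => !decide (hasZeroRun k w))).length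

/-- Sum of the skews of all binary words of length `n` containing no run of `k` consecutive 0s. -/
def beta (k n : ℕ) : ℤ :=
  (((allWords n).filter (fun w => !decide (hasZeroRun k w))).map skew).sum

/-- Strict lexicographic order on binary words, with 0 < 1. -/
def lexLt (u v : List Bool) : Prop := List.Lex (· < ·) u v

instance : DecidableRel lexLt := fun _ _ => inferInstanceAs (Decidable (List.Lex _ _ _))

/-- Weak lexicographic order on binary words. -/
def lexLe (u v : List Bool) : Prop := lexLt u v ∨ u = v

instance : DecidableRel lexLe := fun _ _ => inferInstanceAs (Decidable (_ ∨ _))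

/-- A binary Lyndon word: nonempty and strictly lexicographically smaller than
each of its nontrivial cyclic rotations. -/
def IsLyndon (w : List Bool) : Prop :=
  w ≠ [] ∧ ∀ i ∈ Finset.Ico 1 w.length, lexLt w (w.rotate i)

instance : DecidablePred IsLyndon := fun _ => inferInstanceAs (Decidable (_ ∧ _))

/-- `ell n k`: the concatenation, in lexicographic order, of all binary Lyndon words of
length `n` whose longest run of consecutive 0s has length exactly `k`. -/
def ell (n k : ℕ) : List Bool :=
  (List.insertionSort lexLe ((allWords n).filter (fun w =>
    decide (IsLyndon w) && decide (hasZeroRun k w) && !decide (hasZeroRun (k + 1) w)))).flatten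

/-- `LWord n`: the lexicographically least binary de Bruijn sequence of order `n`, i.e. the
concatenation, in lexicographic order, of all binary Lyndon words of length dividing `n`. -/
def LWord (n : ℕ) : List Bool :=
  (List.insertionSort lexLe (((List.range (n + 1)).flatMap allWords).filter
    (fun w => decide (IsLyndon w) && decide (w.length ∣ n)))).flatten

/-- The number of occurrences of `0^k` as a subword of `w`. -/
def occCount (k : ℕ) (w : List Bool) : ℕ :=
  ((List.range (w.length + 1)).filter
    (fun i => decide (List.replicate k false <+: w.drop i))).length

lemma length_allWords (n : ℕ) : (allWords n).length = 2 ^ n := by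
  induction n with
  | zero => rfl
  | succ n ih =>
    rw [allWords, List.length_flatMap]
    have : (List.map (List.length ∘ fun w => [w ++ [false], w ++ [true]]) (allWords n)).sum
        = 2 * (allWords n).length := by
      generalize (allWords n) = l
      induction l with
      | nil => rfl
      | cons a l ihl => simp at ihl ⊢; omega
    rw [show (List.map (fun a => [a ++ [false], a ++ [true]].length) (allWords n)) = List.map (List.length ∘ fun w => [w ++ [false], w ++ [true]]) (allWords n) from rfl, this, ih, pow_succ]; ring

lemma allWords_add (a b : ℕ) :
    allWords (a + b) = (allWords a).flatMap (fun u => (allWords b).map (u ++ ·)) := by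
  induction b with
  | zero => simp [allWords]
  | succ b ih =>
    show allWords ((a+b)+1) = _
    rw [allWords, ih, allWords]
    simp [List.flatMap_map, List.map_flatMap, List.flatMap_assoc]

lemma mem_allWords {w : List Bool} {n : ℕ} : w ∈ allWords n ↔ w.length = n := by
  induction n generalizing w with
  | zero => simp [allWords, List.length_eq_zero_iff]
  | succ n ih =>
    simp only [allWords, List.mem_flatMap, List.mem_cons, List.mem_singleton,
      List.not_mem_nil, or_false]
    constructor
    · rintro ⟨u, hu, rfl | rfl⟩ <;> simp [ih.1 hu]
    · intro hw
      have hne : w ≠ [] := by intro h; simp [h] at hw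
      refine ⟨w.dropLast, ih.2 ?_, ?_⟩
      · simp [hw]
      · have hsplit : w.dropLast ++ [w.getLast hne] = w := List.dropLast_append_getLast hne
        cases hgl : w.getLast hne
        · left; rw [hgl] at hsplit; exact hsplit.symm
        · right; rw [hgl] at hsplit; exact hsplit.symm

lemma nodup_allWords (n : ℕ) : (allWords n).Nodup := by
  induction n with
  | zero => simp [allWords]
  | succ n ih =>
    rw [allWords, List.nodup_flatMap]
    constructor
    · intro u _; simp
    · refine ih.pairwise_of_forall_ne ?_
      intro u _ v _ huv
      simp only [Function.onFun, List.disjoint_left, List.mem_cons, List.mem_singleton,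
        List.not_mem_nil, or_false]
      rintro w (rfl | rfl) (h | h) <;>
        exact huv (List.append_inj_left' h rfl)


lemma alpha_eq_countP (k n : ℕ) :
    alpha k n = (allWords n).countP (fun w => !decide (hasZeroRun k w)) :=
  (List.countP_eq_length_filter).symm

lemma hasZeroRun_of_append_left {k : ℕ} {u v : List Bool} (h : hasZeroRun k u) :
    hasZeroRun k (u ++ v) := h.trans ((List.prefix_append u v).isInfix)

lemma hasZeroRun_of_append_right {k : ℕ} {u v : List Bool} (h : hasZeroRun k v) :
    hasZeroRun k (u ++ v) := h.trans ((List.suffix_append u v).isInfix)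

lemma alpha_le_two_pow (k n : ℕ) : alpha k n ≤ 2 ^ n := by
  rw [alpha_eq_countP, ← length_allWords n]; exact List.countP_le_length

lemma alpha_submult (k a b : ℕ) : alpha k (a + b) ≤ alpha k a * alpha k b := by
  rw [alpha_eq_countP, allWords_add, List.countP_flatMap]
  have hb : ∀ u ∈ allWords a,
      (List.countP (fun w => !decide (hasZeroRun k w)) ∘ fun u => (allWords b).map (u ++ ·)) u
      ≤ (if (!decide (hasZeroRun k u) : Bool) then alpha k b else 0) := by
    intro u _
    simp only [Function.comp_apply, List.countP_map]
    by_cases hu : hasZeroRun k u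
    · have h0 : List.countP ((fun w => !decide (hasZeroRun k w)) ∘ fun v => u ++ v)
          (allWords b) = 0 :=
        List.countP_eq_zero.2 (fun v _ => by simp [hasZeroRun_of_append_left hu])
      rw [h0]; exact Nat.zero_le _
    · simp only [hu, decide_eq_false hu, Bool.not_false, if_true, alpha_eq_countP]
      apply List.countP_mono_left
      intro v _ hv
      simp only [Function.comp_apply, Bool.not_eq_true', decide_eq_false_iff_not] at hv ⊢
      exact fun h => hv (hasZeroRun_of_append_right h)
  calc (List.map _ (allWords a)).sum
      ≤ (List.map (fun u => if (!decide (hasZeroRun k u) : Bool) then alpha k b else 0)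
          (allWords a)).sum := List.sum_le_sum hb
    _ = alpha k a * alpha k b := by
        rw [alpha_eq_countP k a]
        induction allWords a with
        | nil => simp
        | cons u l ih =>
          simp only [List.map_cons, List.sum_cons, List.countP_cons, ih]
          by_cases hu : hasZeroRun k u <;> simp [hu, add_mul] <;> ring


/-- the witness word -/
def gw (k j : ℕ) (u : List Bool) : List Bool :=
  u.take j ++ ([true] ++ (List.replicate k false ++ u.drop j))

lemma gw_getElem_true {k j : ℕ} {u : List Bool} (hj : j ≤ u.length) :
    (gw k j u)[j]? = some true := by
  unfold gw
  rw [List.getElem?_append_right (by simp [hj]), List.length_take, min_eq_left hj]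
  simp

lemma gw_getElem_false {k j : ℕ} {u : List Bool} (hj : j ≤ u.length) {t : ℕ} (ht : t < k) :
    (gw k j u)[j + 1 + t]? = some false := by
  unfold gw
  rw [List.getElem?_append_right (by simp [hj]; omega), List.length_take, min_eq_left hj]
  have : j + 1 + t - j = 1 + t := by omega
  rw [this, List.getElem?_append_right (by simp), List.getElem?_append_left (by simpa)]
  simp [List.getElem?_replicate, ht]

lemma countP_run_lower (k : ℕ) (hk : 1 ≤ k) :
    k * 2 ^ (k - 1) ≤ (allWords (2 * k)).countP (fun w => decide (hasZeroRun k w)) := by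
  classical
  set T : Finset (List Bool) :=
    ((allWords (2 * k)).filter (fun w => decide (hasZeroRun k w))).toFinset with hT
  have hTcard : T.card =
      (allWords (2 * k)).countP (fun w => decide (hasZeroRun k w)) := by
    rw [hT, List.toFinset_card_of_nodup ((nodup_allWords _).filter _),
      List.countP_eq_length_filter]
  set S : Finset (ℕ × List Bool) := Finset.range k ×ˢ (allWords (k - 1)).toFinset with hS
  have hScard : S.card = k * 2 ^ (k - 1) := by
    rw [hS, Finset.card_product, Finset.card_range,
      List.toFinset_card_of_nodup (nodup_allWords _), length_allWords]
  have hmem : ∀ x ∈ S, gw k x.1 x.2 ∈ T := by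
    rintro ⟨j, u⟩ hx
    simp only [hS, Finset.mem_product, Finset.mem_range, List.mem_toFinset] at hx
    obtain ⟨hj, hu⟩ := hx
    have hul : u.length = k - 1 := mem_allWords.1 hu
    simp only [hT, List.mem_toFinset, List.mem_filter]
    constructor
    · apply mem_allWords.2
      simp [gw, List.length_take, hul]
      omega
    · simp only [decide_eq_true_eq]
      exact ⟨u.take j ++ [true], u.drop j, by simp [gw]⟩
  have hinj : Set.InjOn (fun x : ℕ × List Bool => gw k x.1 x.2) ↑S := by
    have key : ∀ j u j' u', j < u.length + 1 → j' < u'.length + 1 → j < j' → j' < k →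
        gw k j u = gw k j' u' → False := by
      intro j u j' u' hj hj' hlt hj'k heq
      have h1 : (gw k j' u')[j']? = some true := gw_getElem_true (by omega)
      have h2 : (gw k j u)[j + 1 + (j' - j - 1)]? = some false :=
        gw_getElem_false (by omega) (by omega)
      rw [heq] at h2
      have : j + 1 + (j' - j - 1) = j' := by omega
      rw [this, h1] at h2
      simp at h2
    rintro ⟨j, u⟩ hx ⟨j', u'⟩ hx' heq
    simp only [hS, Finset.mem_product, Finset.mem_range, List.mem_toFinset, Set.mem_setOf_eq,
      Finset.coe_product, Set.mem_prod, Finset.mem_coe] at hx hx'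
    obtain ⟨hj, hu⟩ := hx
    obtain ⟨hj', hu'⟩ := hx'
    have hul : u.length = k - 1 := mem_allWords.1 hu
    have hul' : u'.length = k - 1 := mem_allWords.1 hu'
    simp only at heq
    rcases lt_trichotomy j j' with h | h | h
    · exact absurd heq (fun heq => key j u j' u' (by omega) (by omega) h hj' heq)
    · subst h
      have hta := List.append_inj heq (by
        rw [List.length_take, List.length_take, hul, hul'])
      have h2 := hta.2
      simp only [List.cons_append, List.nil_append] at h2
      have h2' : List.replicate k false ++ u.drop j = List.replicate k false ++ u'.drop j := by
        injection h2
      have h3 : u.drop j = u'.drop j := (List.append_inj h2' rfl).2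
      have : u = u' := by
        rw [← List.take_append_drop j u, ← List.take_append_drop j u', hta.1, h3]
      simp [this]
    · exact absurd heq.symm (fun heq => key j' u' j u (by omega) (by omega) h hj heq)
  calc k * 2 ^ (k - 1) = S.card := hScard.symm
    _ ≤ T.card := Finset.card_le_card_of_injOn _ hmem hinj
    _ = _ := hTcard


lemma two_mul_le_two_pow {k : ℕ} (hk : 1 ≤ k) : 2 * k ≤ 2 ^ k := by
  induction k with
  | zero => omega
  | succ k ih =>
    rcases Nat.eq_or_lt_of_le hk with h | h
    · simp [← h]
    · have h1 : 1 ≤ k := by omega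
      have := ih h1
      have h2 : 1 ≤ 2 ^ k := Nat.one_le_two_pow
      rw [pow_succ]; omega

lemma sum_half_pow_le (N : ℕ) : ∑ i ∈ Finset.range N, ((1:ℝ)/2) ^ i ≤ 2 := by
  have : ∑ i ∈ Finset.range N, ((1:ℝ)/2) ^ i = 2 - 2 * (1/2)^N := by
    induction N with
    | zero => simp
    | succ N ih => rw [Finset.sum_range_succ, ih, pow_succ]; ring
  rw [this]
  have : (0:ℝ) ≤ 2 * (1/2)^N := by positivity
  linarith

lemma sum_jp1_half_pow_le (N : ℕ) : ∑ i ∈ Finset.range N, ((i:ℝ)+1) * ((1:ℝ)/2) ^ i ≤ 4 := by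
  have : ∑ i ∈ Finset.range N, ((i:ℝ)+1) * ((1:ℝ)/2) ^ i = 4 - ((2*N+4)) * (1/2)^N := by
    induction N with
    | zero => simp
    | succ N ih => rw [Finset.sum_range_succ, ih, pow_succ]; push_cast; ring
  rw [this]
  have : (0:ℝ) ≤ (2*(N:ℝ)+4) * (1/2)^N := by positivity
  linarith

lemma exp_quarter_le_two : Real.exp (1/4) ≤ 2 := by
  have h4 : Real.exp (1/4) ^ (4:ℕ) = Real.exp 1 := by
    rw [← Real.exp_nat_mul]; norm_num
  nlinarith [Real.exp_one_lt_d9, Real.exp_pos (1/4:ℝ), Real.exp_pos (1:ℝ),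
    sq_nonneg (Real.exp (1/4)), sq_nonneg (Real.exp (1/4) - 2), sq_nonneg (Real.exp (1/4) + 2)]

lemma exp_neg_le {t : ℝ} (ht : 0 < t) : Real.exp (-t) ≤ 4 / t^2 := by
  have h1 : t/2 ≤ Real.exp (t/2) := by
    have := Real.add_one_le_exp (t/2); linarith
  have h2 : (t/2)^2 ≤ Real.exp t := by
    have he : Real.exp t = Real.exp (t/2) ^ 2 := by
      rw [← Real.exp_nat_mul]; push_cast; ring_nf
    rw [he]
    exact pow_le_pow_left₀ (by linarith) h1 2
  rw [Real.exp_neg, inv_eq_one_div, div_le_div_iff₀ (Real.exp_pos t) (by positivity)]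
  nlinarith [sq_nonneg t]


lemma alpha_two_k_le (k : ℕ) (hk : 1 ≤ k) :
    alpha k (2 * k) + k * 2 ^ (k - 1) ≤ 2 ^ (2 * k) := by
  have h := List.length_eq_countP_add_countP (fun w => !decide (hasZeroRun k w)) (l := allWords (2*k))
  rw [length_allWords] at h
  have hc : (allWords (2*k)).countP
      (fun a => decide ¬((fun w => !decide (hasZeroRun k w)) a = true)) =
      (allWords (2*k)).countP (fun w => decide (hasZeroRun k w)) := by
    apply List.countP_congr
    intro w _
    by_cases hw : hasZeroRun k w <;> simp [hw]
  rw [hc] at h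
  have := countP_run_lower k hk
  have halpha : alpha k (2*k) = (allWords (2*k)).countP (fun w => !decide (hasZeroRun k w)) :=
    (List.countP_eq_length_filter).symm
  omega

lemma alpha_pow_bound (k : ℕ) (hk : 1 ≤ k) (m : ℕ) :
    alpha k m ≤ alpha k (2*k) ^ (m / (2*k)) * 2 ^ (m % (2*k)) := by
  induction m using Nat.strong_induction_on with
  | _ m ih =>
    by_cases hm : m < 2*k
    · rw [Nat.div_eq_of_lt hm, Nat.mod_eq_of_lt hm, pow_zero, one_mul]
      exact alpha_le_two_pow k m
    · push_neg at hm
      obtain ⟨m', rfl⟩ : ∃ m', m = 2*k + m' := ⟨m - 2*k, by omega⟩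
      have h2k : 0 < 2*k := by omega
      calc alpha k (2*k + m') ≤ alpha k (2*k) * alpha k m' := alpha_submult k (2*k) m'
        _ ≤ alpha k (2*k) * (alpha k (2*k) ^ (m' / (2*k)) * 2 ^ (m' % (2*k))) :=
            Nat.mul_le_mul_left _ (ih m' (by omega))
        _ = alpha k (2*k) ^ (m' / (2*k) + 1) * 2 ^ (m' % (2*k)) := by ring
        _ = _ := by
            rw [Nat.add_div_left _ h2k, Nat.add_mod_left]


lemma alpha_real_bound (k m : ℕ) (hk : 1 ≤ k) :
    (alpha k m : ℝ) ≤ 2^m * Real.exp (1/4) * Real.exp (-(m : ℝ) / 2^(k+2)) := by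
  have h2kR : (2:ℝ) * k ≤ 2^k := by exact_mod_cast two_mul_le_two_pow hk
  set x : ℝ := k / 2^(k+1) with hx
  have hx0 : 0 < x := by positivity
  have hxq : x ≤ 1/4 := by
    rw [hx, div_le_div_iff₀ (by positivity) (by norm_num)]
    have h2 : (2:ℝ)^(k+1) = 2 * 2^k := by ring
    nlinarith
  set q : ℕ := m / (2*k) with hq
  have hA : (alpha k (2*k) : ℝ) ≤ 2^(2*k) * (1 - x) := by
    have h1 := alpha_two_k_le k hk
    have hpow2 : (2:ℝ)^(2*k) = 2^(k-1) * 2^(k+1) := by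
      rw [← pow_add]; congr 1; omega
    have h2 : ((k * 2^(k-1) : ℕ) : ℝ) = 2^(2*k) * x := by
      push_cast
      rw [hx, hpow2]
      field_simp
    have h3 : (alpha k (2*k) : ℝ) + ((k * 2^(k-1) : ℕ) : ℝ) ≤ 2^(2*k) := by
      exact_mod_cast h1
    linarith
  have hα : (alpha k m : ℝ) ≤ 2^m * (1 - x)^q := by
    have h1 := alpha_pow_bound k hk m
    have h2 : ((alpha k (2*k) ^ q * 2 ^ (m % (2*k)) : ℕ) : ℝ)
        ≤ (2^(2*k) * (1 - x))^q * 2^(m % (2*k)) := by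
      push_cast
      apply mul_le_mul_of_nonneg_right _ (by positivity)
      exact pow_le_pow_left₀ (by positivity) hA q
    have h3 : ((2:ℝ)^(2*k) * (1 - x))^q * 2^(m % (2*k)) = 2^(2*k*q + m % (2*k)) * (1-x)^q := by
      rw [mul_pow, ← pow_mul, pow_add]; ring
    have h4 : 2*k*q + m % (2*k) = m := by rw [hq]; exact Nat.div_add_mod m (2*k)
    calc (alpha k m : ℝ) ≤ ((alpha k (2*k) ^ q * 2 ^ (m % (2*k)) : ℕ) : ℝ) := by
          exact_mod_cast h1
      _ ≤ (2^(2*k) * (1 - x))^q * 2^(m % (2*k)) := h2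
      _ = 2^(2*k*q + m % (2*k)) * (1-x)^q := h3
      _ = 2^m * (1-x)^q := by rw [h4]
  have hexp : (1 - x)^q ≤ Real.exp (1/4) * Real.exp (-(m : ℝ) / 2^(k+2)) := by
    have h1x : (0:ℝ) ≤ 1 - x := by linarith
    have hle : 1 - x ≤ Real.exp (-x) := by
      have := Real.add_one_le_exp (-x); linarith
    have hp1 : (1 - x)^q ≤ Real.exp (-x)^q := pow_le_pow_left₀ h1x hle q
    have hp2 : Real.exp (-x)^q = Real.exp (-((q:ℝ)*x)) := by
      rw [← Real.exp_nat_mul]; ring_nf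
    have hgoal : -((q:ℝ)*x) ≤ 1/4 + -(m : ℝ) / 2^(k+2) := by
      set A : ℝ := 2^(k+1) with hA'
      have hApos : (0:ℝ) < A := by positivity
      have hxA : x * A = k := by rw [hx]; field_simp
      have hmnat : m < 2*k*q + 2*k := by
        rw [hq]
        have h5 := Nat.div_add_mod m (2*k)
        have h6 := Nat.mod_lt m (show 0 < 2*k by omega)
        omega
      have hm : (m:ℝ) ≤ 2*(k:ℝ)*(q:ℝ) + 2*(k:ℝ) := by exact_mod_cast hmnat.le
      have hA2 : (2:ℝ)^(k+2) = 2*A := by rw [hA']; ring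
      have hAhalf : A = 2 * 2^k := by rw [hA']; ring
      rw [hA2]
      have hsuff : (m:ℝ) ≤ (1/4 + (q:ℝ)*x) * (2*A) := by
        have expand : (1/4 + (q:ℝ)*x)*(2*A) = A/2 + (q:ℝ)*x*(2*A) := by ring
        have key : (q:ℝ)*x*(2*A) = 2*(q:ℝ)*(k:ℝ) := by rw [← hxA]; ring
        linarith
      have h7 := (div_le_iff₀ (show (0:ℝ) < 2*A by positivity)).2 hsuff
      have h8 : -(m:ℝ)/(2*A) = -((m:ℝ)/(2*A)) := by ring
      rw [h8]
      linarith
    calc (1-x)^q ≤ Real.exp (-x)^q := hp1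
      _ = Real.exp (-((q:ℝ)*x)) := hp2
      _ ≤ Real.exp (1/4 + -(m : ℝ) / 2^(k+2)) := Real.exp_le_exp.2 hgoal
      _ = Real.exp (1/4) * Real.exp (-(m : ℝ) / 2^(k+2)) := Real.exp_add _ _
  calc (alpha k m : ℝ) ≤ 2^m * (1 - x)^q := hα
    _ ≤ 2^m * (Real.exp (1/4) * Real.exp (-(m : ℝ) / 2^(k+2))) :=
        mul_le_mul_of_nonneg_left hexp (by positivity)
    _ = 2^m * Real.exp (1/4) * Real.exp (-(m : ℝ) / 2^(k+2)) := by ring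


/-- `Σ_{k=1}^{n−1} k·α_k(n−k−1) = O(2^n log n / n)`. -/
theorem sum_alpha_upper :
    ∃ C > (0 : ℝ), ∀ n : ℕ, 2 ≤ n →
      (∑ k ∈ Finset.Icc 1 (n - 1), (k : ℝ) * (alpha k (n - k - 1) : ℝ))
        ≤ C * 2 ^ n * Real.log n / n := by
  refine ⟨3000, by norm_num, ?_⟩
  intro n hn
  set K := Nat.log 2 n with hK
  have hK1 : 1 ≤ K := Nat.log_pos (by norm_num) hn
  have hpK : 2^K ≤ n := Nat.pow_log_le_self 2 (by omega)
  have hpK' : n < 2^(K+1) := Nat.lt_pow_succ_log_self (by norm_num) n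
  have h2K : 2*K ≤ n := le_trans (two_mul_le_two_pow hK1) hpK
  have hKn : K ≤ n := by omega
  have hn0 : (0:ℝ) < n := by positivity
  have hnR : (2:ℝ) ≤ n := by exact_mod_cast hn
  have hlogn : (0:ℝ) < Real.log n := Real.log_pos (by linarith)
  have hKlog : (K:ℝ) ≤ 2 * Real.log n := by
    have h1 : (2:ℝ)^K ≤ n := by exact_mod_cast hpK
    have h2 := Real.log_le_log (by positivity) h1
    rw [Real.log_pow] at h2
    have hl2 : (1/2:ℝ) ≤ Real.log 2 := by
      have := Real.log_two_gt_d9; linarith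
    nlinarith [Nat.cast_nonneg (α := ℝ) K]
  have h2negK : ((1:ℝ)/2)^K ≤ 2 / n := by
    have h1 : (n:ℝ) ≤ 2 * 2^K := by
      have : (n:ℝ) < 2^(K+1) := by exact_mod_cast hpK'
      rw [pow_succ] at this; linarith
    rw [one_div_pow, div_le_div_iff₀ (by positivity) hn0, one_mul]
    linarith
  have hpow_n : (2:ℝ)^n = 2 * 2^(n-1) := by
    have h1 : n - 1 + 1 = n := by omega
    conv_lhs => rw [← h1]
    rw [pow_succ]; ring
  -- rewrite sum domain
  have hdom : Finset.Icc 1 (n-1) = Finset.Ico 1 n := by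
    rw [← Finset.Ico_add_one_right_eq_Icc]; congr 1; omega
  rw [hdom, ← Finset.sum_Ico_consecutive _ hK1 hKn]
  -- tail bound
  have tail : ∑ k ∈ Finset.Ico K n, (k : ℝ) * (alpha k (n - k - 1) : ℝ)
      ≤ ((K:ℝ)+1) * (2^n/n) * 4 := by
    have hterm : ∀ k ∈ Finset.Ico K n, (k : ℝ) * (alpha k (n - k - 1) : ℝ)
        ≤ ((K:ℝ)+1) * (2^n/n) * ((((k-K:ℕ)):ℝ)+1) * ((1:ℝ)/2)^(k-K) := by
      intro k hk
      rw [Finset.mem_Ico] at hk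
      obtain ⟨hk1, hk2⟩ := hk
      have hkj : k = K + (k - K) := by omega
      set j := k - K with hj
      have hm : (n - k - 1) + k = n - 1 := by omega
      have hα : (alpha k (n-k-1):ℝ) ≤ 2^(n-k-1) := by
        exact_mod_cast alpha_le_two_pow k (n-k-1)
      have hpow : (2:ℝ)^(n-k-1) = 2^(n-1) * (1/2)^k := by
        rw [one_div_pow, mul_div_assoc' .. , eq_div_iff (by positivity), ← pow_add, hm]
        ring
      have hcast_k : (k:ℝ) ≤ ((K:ℝ)+1)*((j:ℝ)+1) := by
        have h1 : (k:ℝ) = (K:ℝ) + (j:ℝ) := by exact_mod_cast hkj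
        nlinarith [Nat.cast_nonneg (α := ℝ) K, Nat.cast_nonneg (α := ℝ) j]
      have hhalfk : ((1:ℝ)/2)^k ≤ (2/(n:ℝ)) * (1/2)^j := by
        rw [hkj, pow_add]
        exact mul_le_mul_of_nonneg_right h2negK (by positivity)
      calc (k : ℝ) * (alpha k (n - k - 1) : ℝ)
          ≤ (k:ℝ) * 2^(n-k-1) := by
            exact mul_le_mul_of_nonneg_left hα (by positivity)
        _ = (k:ℝ) * (2^(n-1) * (1/2)^k) := by rw [hpow]
        _ ≤ (((K:ℝ)+1)*((j:ℝ)+1)) * (2^(n-1) * ((2/(n:ℝ)) * (1/2)^j)) := by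
            apply mul_le_mul hcast_k (mul_le_mul_of_nonneg_left hhalfk (by positivity))
              (by positivity) (by positivity)
        _ = ((K:ℝ)+1) * (2^n/n) * (((j:ℝ))+1) * ((1:ℝ)/2)^j := by
            rw [hpow_n]; field_simp
    calc ∑ k ∈ Finset.Ico K n, (k : ℝ) * (alpha k (n - k - 1) : ℝ)
        ≤ ∑ k ∈ Finset.Ico K n,
            ((K:ℝ)+1) * (2^n/n) * ((((k-K:ℕ)):ℝ)+1) * ((1:ℝ)/2)^(k-K) :=
          Finset.sum_le_sum hterm
      _ = ((K:ℝ)+1) * (2^n/n) *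
            ∑ k ∈ Finset.Ico K n, ((((k-K:ℕ)):ℝ)+1) * ((1:ℝ)/2)^(k-K) := by
          rw [Finset.mul_sum]; apply Finset.sum_congr rfl; intro k _; ring
      _ ≤ ((K:ℝ)+1) * (2^n/n) * 4 := by
          apply mul_le_mul_of_nonneg_left _ (by positivity)
          rw [Finset.sum_Ico_eq_sum_range]
          have : ∀ i ∈ Finset.range (n - K),
              ((((K + i - K:ℕ)):ℝ)+1) * ((1:ℝ)/2)^(K + i - K) = ((i:ℝ)+1) * ((1:ℝ)/2)^i := by
            intro i _
            congr 2 <;> [skip; skip] <;> norm_num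
          rw [Finset.sum_congr rfl this]
          exact sum_jp1_half_pow_le _
  -- head bound
  have head : ∑ k ∈ Finset.Ico 1 K, (k : ℝ) * (alpha k (n - k - 1) : ℝ)
      ≤ 512 * (K:ℝ) * (2^n/n) * 2 := by
    have hterm : ∀ k ∈ Finset.Ico 1 K, (k : ℝ) * (alpha k (n - k - 1) : ℝ)
        ≤ 512 * (K:ℝ) * (2^n/n) * ((1:ℝ)/2)^(K-k) := by
      intro k hk
      rw [Finset.mem_Ico] at hk
      obtain ⟨hk1, hk2⟩ := hk
      have hkj : K = k + (K - k) := by omega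
      set j := K - k with hj
      have hj1 : 1 ≤ j := by omega
      have hm : (n - k - 1) + k = n - 1 := by omega
      have hmcast : ((n - k - 1 : ℕ):ℝ) = (n:ℝ) - k - 1 := by
        have h1 : n - k - 1 = n - (k+1) := by omega
        rw [h1, Nat.cast_sub (by omega)]; push_cast; ring
      have hkK : (k:ℝ) ≤ (K:ℝ) := by exact_mod_cast hk2.le
      have hKR : ((2:ℝ))^K = 2^k * 2^j := by rw [← pow_add, ← hkj]
      have hnK2 : ((2:ℝ))^K ≤ n := by exact_mod_cast hpK
      have h2KR : 2*(K:ℝ) ≤ n := by exact_mod_cast h2K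
      have hmge : ((2:ℝ))^k * 2^j / 2 ≤ ((n - k - 1 : ℕ):ℝ) := by
        rw [hmcast, ← hKR]
        have : (k:ℝ) + 1 ≤ K := by exact_mod_cast hk2
        linarith
      have h4 : ((2:ℝ))^(k+2) = 4 * 2^k := by ring
      have hexp1 : ((2:ℝ))^j/8 ≤ ((n - k - 1 : ℕ):ℝ) / 2^(k+2) := by
        have e : (((2:ℝ))^k*2^j/2)/(2^(k+2)) = 2^j/8 := by
          rw [h4]; field_simp; ring
        rw [← e]
        exact div_le_div_of_nonneg_right hmge (by positivity)
      have hexp2 : Real.exp (-((n - k - 1 : ℕ):ℝ)/2^(k+2)) ≤ 256/(((2:ℝ))^j)^2 := by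
        have h5 : Real.exp (-((n - k - 1 : ℕ):ℝ)/2^(k+2)) ≤ Real.exp (-(((2:ℝ))^j/8)) := by
          apply Real.exp_le_exp.2
          rw [neg_div]
          exact neg_le_neg hexp1
        have h6 := exp_neg_le (show (0:ℝ) < 2^j/8 by positivity)
        have h7 : 4/((((2:ℝ))^j/8)^2) = 256/(((2:ℝ))^j)^2 := by
          field_simp; ring
        rw [h7] at h6
        exact h5.trans h6
      have hpow : (2:ℝ)^(n-k-1) = 2^(n-1) * (1/2)^k := by
        rw [one_div_pow, mul_div_assoc' .. , eq_div_iff (by positivity), ← pow_add, hm]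
        ring
      have hhalfk : ((1:ℝ)/2)^k ≤ (2/(n:ℝ)) * 2^j := by
        have e1 : ((1:ℝ)/2)^k = (1/2)^K * 2^j := by
          have h8 : ((1:ℝ)/2)^K = (1/2)^k * (1/2)^j := by rw [hkj, pow_add]
          have hz : ((1:ℝ)/2)^j * 2^j = 1 := by rw [← mul_pow]; norm_num
          rw [h8, mul_assoc, hz, mul_one]
        rw [e1]
        exact mul_le_mul_of_nonneg_right h2negK (by positivity)
      have hαb := alpha_real_bound k (n-k-1) hk1
      calc (k : ℝ) * (alpha k (n - k - 1) : ℝ)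
          ≤ (k:ℝ) * (2^(n-k-1) * Real.exp (1/4) *
              Real.exp (-((n - k - 1 : ℕ):ℝ)/2^(k+2))) := by
            apply mul_le_mul_of_nonneg_left _ (by positivity)
            exact_mod_cast hαb
        _ = (k:ℝ) * ((2^(n-1) * (1/2)^k) * Real.exp (1/4) *
              Real.exp (-((n - k - 1 : ℕ):ℝ)/2^(k+2))) := by rw [hpow]
        _ ≤ (K:ℝ) * ((2^(n-1) * ((2/(n:ℝ)) * 2^j)) * 2 * (256/(((2:ℝ))^j)^2)) := by
            apply mul_le_mul hkK _ (by positivity) (by positivity)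
            apply mul_le_mul _ hexp2 (Real.exp_pos _).le (by positivity)
            apply mul_le_mul _ exp_quarter_le_two (Real.exp_pos _).le (by positivity)
            exact mul_le_mul_of_nonneg_left hhalfk (by positivity)
        _ = 512 * (K:ℝ) * (2^n/n) * ((1:ℝ)/2)^j := by
            rw [one_div_pow, hpow_n]
            field_simp
            ring
    calc ∑ k ∈ Finset.Ico 1 K, (k : ℝ) * (alpha k (n - k - 1) : ℝ)
        ≤ ∑ k ∈ Finset.Ico 1 K, 512 * (K:ℝ) * (2^n/n) * ((1:ℝ)/2)^(K-k) :=
          Finset.sum_le_sum hterm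
      _ = 512 * (K:ℝ) * (2^n/n) * ∑ k ∈ Finset.Ico 1 K, ((1:ℝ)/2)^(K-k) := by
          rw [Finset.mul_sum]
      _ ≤ 512 * (K:ℝ) * (2^n/n) * 2 := by
          apply mul_le_mul_of_nonneg_left _ (by positivity)
          rw [Finset.sum_Ico_eq_sum_range]
          have e : ∀ i ∈ Finset.range (K - 1),
              ((1:ℝ)/2)^(K-(1+i)) = (fun t => ((1:ℝ)/2)^t) ((K-1) - 1 - i) * (1/2) := by
            intro i hi
            rw [Finset.mem_range] at hi
            simp only
            rw [← pow_succ]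
            congr 1
            omega
          rw [Finset.sum_congr rfl e, ← Finset.sum_mul, Finset.sum_range_reflect]
          have := sum_half_pow_le (K-1)
          linarith
  -- combine
  have hP : (0:ℝ) < (2:ℝ)^n/n := by positivity
  set P : ℝ := (2:ℝ)^n/n with hPdef
  have hKP : (K:ℝ) * P ≤ 2 * Real.log n * P :=
    mul_le_mul_of_nonneg_right hKlog hP.le
  have hK1R : (1:ℝ) ≤ (K:ℝ) := by exact_mod_cast hK1
  have hPKP : P ≤ (K:ℝ) * P := by nlinarith
  have hgoal_eq : (3000:ℝ) * 2^n * Real.log n / n = 3000 * Real.log n * P := by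
    rw [hPdef]; ring
  rw [hgoal_eq]
  have : ((K:ℝ)+1) * P * 4 = 4*((K:ℝ)*P) + 4*P := by ring
  nlinarith [head, tail]
end

section
/- There exist a constant c > 0 and an integer N such that for all integers n ≥ N, Σ_{k=⌈log₂ n⌉+1}^{n−2} (k/3 − 2) · α_{k+1}(n−k−2) ≥ c · 2^n · log n / n (in the right-hand side, log n denotes the natural logarithm). -/
lemma mem_allWords_length {n : ℕ} {w : List Bool} (h : w ∈ allWords n) : w.length = n := by
  induction n generalizing w with
  | zero => simp [allWords] at h; simp [h]
  | succ n ih =>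
    simp only [allWords, List.mem_flatMap, List.mem_cons, List.mem_singleton,
      List.not_mem_nil, or_false] at h
    obtain ⟨u, hu, h | h⟩ := h <;> subst h <;> simp [ih hu]

lemma filter_or_length {α : Type*} (p q : α → Bool) (l : List α) :
    (l.filter (fun x => p x || q x)).length ≤ (l.filter p).length + (l.filter q).length := by
  induction l with
  | nil => simp
  | cons a l ih =>
    by_cases hp : p a <;> by_cases hq : q a <;> simp [hp, hq] <;> omega

lemma filter_not_length {α : Type*} (p : α → Bool) (l : List α) :
    (l.filter p).length + (l.filter (fun x => !p x)).length = l.length := by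
  induction l with
  | nil => simp
  | cons a l ih => by_cases hp : p a <;> simp [hp] <;> omega

lemma sum_map_ite {α : Type*} (P : α → Bool) (l : List α) :
    (l.map (fun a => if P a then 1 else 0)).sum = (l.filter P).length := by
  induction l with
  | nil => simp
  | cons a l ih => by_cases hp : P a <;> simp [hp, ih] <;> omega

lemma suffix_concat_iff (s t : List Bool) (a b : Bool) :
    s ++ [a] <:+ t ++ [b] ↔ a = b ∧ s <:+ t := by
  constructor
  · rintro ⟨u, hu⟩
    rw [← List.append_assoc] at hu
    obtain ⟨h1, h2⟩ := List.append_inj' hu (by simp)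
    simp at h2
    exact ⟨h2, u, by simpa using h1⟩
  · rintro ⟨rfl, u, rfl⟩
    exact ⟨u, by simp⟩

lemma infix_concat_iff (l t : List Bool) (b : Bool) :
    l <:+: t ++ [b] ↔ l <:+: t ∨ l <:+ t ++ [b] := by
  constructor
  · rintro ⟨s, u, hu⟩
    rcases List.eq_nil_or_concat u with rfl | ⟨u₂, c, rfl⟩
    · right; exact ⟨s, by simpa using hu⟩
    · left
      rw [List.concat_eq_append, ← List.append_assoc] at hu
      obtain ⟨h1, -⟩ := List.append_inj' hu (by simp)
      exact ⟨s, u₂, by simpa using h1⟩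
  · rintro (h | h)
    · exact h.trans ⟨[], [b], by simp⟩
    · exact h.isInfix

lemma run_concat (K : ℕ) (w : List Bool) (b : Bool) :
    hasZeroRun (K + 1) (w ++ [b]) ↔
      hasZeroRun (K + 1) w ∨ (b = false ∧ List.replicate K false <:+ w) := by
  unfold hasZeroRun
  rw [infix_concat_iff]
  have hrep : List.replicate (K + 1) false = List.replicate K false ++ [false] := by
    simp [List.replicate_succ' ]
  constructor
  · rintro (h | h)
    · exact Or.inl h
    · rw [hrep, suffix_concat_iff] at h
      exact Or.inr ⟨h.1.symm, h.2⟩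
  · rintro (h | ⟨rfl, h⟩)
    · exact Or.inl h
    · right; rw [hrep, suffix_concat_iff]; exact ⟨rfl, h⟩

lemma suffix_count (j m : ℕ) :
    ((allWords m).filter (fun w => decide (List.replicate j false <:+ w))).length
      ≤ 2 ^ (m - j) := by
  induction m generalizing j with
  | zero =>
    cases j <;> simp [allWords, List.filter]
  | succ m ih =>
    cases j with
    | zero =>
      calc ((allWords (m+1)).filter _).length ≤ (allWords (m+1)).length :=
            List.length_filter_le _ _
        _ = 2 ^ (m + 1 - 0) := by rw [length_allWords]; norm_num
    | succ j =>
      rw [show allWords (m+1) = (allWords m).flatMap (fun w => [w ++ [false], w ++ [true]]) from rfl,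
        List.filter_flatMap, List.length_flatMap]
      have key : ∀ w : List Bool,
          (List.filter (fun w' => decide (List.replicate (j+1) false <:+ w'))
            [w ++ [false], w ++ [true]]).length
          = if decide (List.replicate j false <:+ w) then 1 else 0 := by
        intro w
        have h1 : (List.replicate (j+1) false <:+ w ++ [false]) ↔ List.replicate j false <:+ w := by
          rw [show List.replicate (j+1) false = List.replicate j false ++ [false] by
            simp [List.replicate_succ'], suffix_concat_iff]
          simp
        have h2 : ¬ (List.replicate (j+1) false <:+ w ++ [true]) := by
          rw [show List.replicate (j+1) false = List.replicate j false ++ [false] by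
            simp [List.replicate_succ'], suffix_concat_iff]
          simp
        by_cases h : List.replicate j false <:+ w <;> simp [List.filter, h1, h2, h]
      calc ((allWords m).map (List.length ∘ fun w =>
              List.filter (fun w' => decide (List.replicate (j+1) false <:+ w')) [w ++ [false], w ++ [true]])).sum
          = ((allWords m).map (fun w => if decide (List.replicate j false <:+ w) then 1 else 0)).sum := by
            congr 1; exact List.map_congr_left (fun w _ => key w)
        _ = ((allWords m).filter (fun w => decide (List.replicate j false <:+ w))).length :=
            sum_map_ite _ _
        _ ≤ 2 ^ (m - j) := ih j
        _ = 2 ^ (m + 1 - (j + 1)) := by congr 1; omega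

lemma bad_eq_zero {K m : ℕ} (h : m < K) :
    ((allWords m).filter (fun w => decide (hasZeroRun K w))).length = 0 := by
  rw [List.length_eq_zero_iff, List.filter_eq_nil_iff]
  intro w hw
  simp only [decide_eq_true_eq]
  intro hr
  have := hr.length_le
  rw [List.length_replicate, mem_allWords_length hw] at this
  omega

lemma bad_count (K m : ℕ) :
    ((allWords m).filter (fun w => decide (hasZeroRun (K + 1) w))).length
      ≤ m * 2 ^ (m - (K + 1)) := by
  induction m with
  | zero => simp [bad_eq_zero (by omega : 0 < K + 1)]
  | succ m ih =>
    rcases lt_or_ge m K with hmK | hmK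
    · simp [bad_eq_zero (by omega : m + 1 < K + 1)]
    -- now K ≤ m
    rw [show allWords (m+1) = (allWords m).flatMap (fun w => [w ++ [false], w ++ [true]]) from rfl,
      List.filter_flatMap, List.length_flatMap]
    have key : ∀ w : List Bool,
        (List.filter (fun w' => decide (hasZeroRun (K+1) w')) [w ++ [false], w ++ [true]]).length
        ≤ 2 * (if decide (hasZeroRun (K+1) w) then 1 else 0)
          + (if decide (List.replicate K false <:+ w) then 1 else 0) := by
      intro w
      by_cases hq : hasZeroRun (K+1) w
      · have hd : (if decide (hasZeroRun (K+1) w) then (1:ℕ) else 0) = 1 := by simp [hq]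
        have hle : (List.filter (fun w' => decide (hasZeroRun (K+1) w'))
            [w ++ [false], w ++ [true]]).length ≤ 2 := List.length_filter_le _ _
        rw [hd]
        split <;> omega
      · have h1 : hasZeroRun (K+1) (w ++ [false]) ↔ (List.replicate K false <:+ w) := by
          rw [run_concat]; simp [hq]
        have h2 : ¬ hasZeroRun (K+1) (w ++ [true]) := by
          rw [run_concat]; simp [hq]
        by_cases hr : List.replicate K false <:+ w <;>
          simp [List.filter, h1, h2, hq, hr]
    have main : ((allWords m).map (List.length ∘ fun w =>
            List.filter (fun w' => decide (hasZeroRun (K+1) w')) [w ++ [false], w ++ [true]])).sum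
        ≤ 2 * ((allWords m).filter (fun w => decide (hasZeroRun (K+1) w))).length
            + ((allWords m).filter (fun w => decide (List.replicate K false <:+ w))).length := by
      calc ((allWords m).map (List.length ∘ fun w =>
            List.filter (fun w' => decide (hasZeroRun (K+1) w')) [w ++ [false], w ++ [true]])).sum
          ≤ ((allWords m).map (fun w => 2 * (if decide (hasZeroRun (K+1) w) then 1 else 0)
              + (if decide (List.replicate K false <:+ w) then 1 else 0))).sum := by
            apply List.sum_le_sum
            intro w _
            exact key w
        _ = _ := by
            rw [← sum_map_ite, ← sum_map_ite, List.sum_map_add]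
            congr 1
            rw [← List.sum_map_mul_left]
    simp only [Function.comp_def] at main
    have hs := suffix_count K m
    rcases Nat.lt_or_ge m (K + 1) with h | h
    · have hz := bad_eq_zero (show m < K + 1 by omega)
      have hmk : m = K := by omega
      subst hmk
      simp only [Nat.sub_self, pow_zero] at hs
      have : m + 1 - (m + 1) = 0 := by omega
      rw [this, pow_zero]
      omega
    · have e1 : m - K = m + 1 - (K + 1) := by omega
      have e2 : m - (K + 1) + 1 = m + 1 - (K + 1) := by omega
      have hfin : 2 * (m * 2 ^ (m - (K+1))) + 2 ^ (m - K)
          = (m + 1) * 2 ^ (m + 1 - (K + 1)) := by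
        rw [e1, ← e2, pow_succ]
        ring
      omega

lemma alpha_add_bad (K m : ℕ) :
    alpha K m + ((allWords m).filter (fun w => decide (hasZeroRun K w))).length = 2 ^ m := by
  unfold alpha
  rw [← length_allWords m, Nat.add_comm]
  exact filter_not_length _ _

lemma alpha_lower {K m : ℕ} (hK : 1 ≤ K) (hKm : K + 1 ≤ m) (hn : 4 * m ≤ 2 ^ K) :
    3 * 2 ^ (m - 2) ≤ alpha K m := by
  obtain ⟨K', rfl⟩ : ∃ K', K = K' + 1 := ⟨K - 1, by omega⟩
  have hbad := bad_count K' m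
  have hsum := alpha_add_bad (K' + 1) m
  have h4 : 4 * (m * 2 ^ (m - (K' + 1))) ≤ 2 ^ m := by
    calc 4 * (m * 2 ^ (m - (K' + 1))) = (4 * m) * 2 ^ (m - (K' + 1)) := by ring
      _ ≤ 2 ^ (K' + 1) * 2 ^ (m - (K' + 1)) := Nat.mul_le_mul_right _ hn
      _ = 2 ^ m := by rw [← pow_add]; congr 1; omega
  have heq : 2 ^ m = 4 * 2 ^ (m - 2) := by
    rw [show (4:ℕ) = 2 ^ 2 from rfl, ← pow_add]
    congr 1; omega
  omega

lemma four_mul_le (t : ℕ) : 4 * (t + 7) + 16 ≤ 2 ^ (t + 7) := by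
  induction t with
  | zero => norm_num
  | succ t ih =>
    have : 2 ^ (t + 1 + 7) = 2 * 2 ^ (t + 7) := by rw [show t + 1 + 7 = (t + 7) + 1 from rfl, pow_succ]; ring
    have h : 4 ≤ 2 ^ (t + 7) := by
      calc (4:ℕ) ≤ 2 ^ 2 := by norm_num
        _ ≤ 2 ^ (t + 7) := Nat.pow_le_pow_right (by norm_num) (by omega)
    omega

/-- `Σ_{k=⌈log₂ n⌉+1}^{n−2} (k/3 − 2)·α_{k+1}(n−k−2) = Ω(2^n log n / n)`. -/
theorem sum_alpha_lower :
    ∃ c > (0 : ℝ), ∃ N : ℕ, ∀ n : ℕ, N ≤ n →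
      c * 2 ^ n * Real.log n / n ≤
        ∑ k ∈ Finset.Icc (Nat.clog 2 n + 1) (n - 2),
          ((k : ℝ) / 3 - 2) * (alpha (k + 1) (n - k - 2) : ℝ) := by
  refine ⟨1 / 128, by norm_num, 4096, fun n hn => ?_⟩
  set c := Nat.clog 2 n with hc
  have hnpow : n ≤ 2 ^ c := Nat.le_pow_clog one_lt_two n
  have hpow2 : 2 ^ (c - 1) < n := Nat.pow_pred_clog_lt_self one_lt_two (by omega)
  have hc12 : 12 ≤ c := by
    by_contra h
    push_neg at h
    have : n ≤ 2 ^ c := hnpow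
    have : (2:ℕ) ^ c ≤ 2 ^ 11 := Nat.pow_le_pow_right (by norm_num) (by omega)
    omega
  have hcpow : 2 ^ c ≤ 2 * n := by
    have : 2 ^ c = 2 * 2 ^ (c - 1) := by
      rw [← pow_succ']
      congr 1
      omega
    omega
  have haux : 4 * c + 16 ≤ 2 ^ c := by
    have := four_mul_le (c - 7)
    have h7 : c - 7 + 7 = c := by omega
    rw [h7] at this
    omega
  have hn2c : 2 * c + 8 ≤ n := by omega
  set k0 := c + 1 with hk0
  set m := n - c - 3 with hm
  have hmk : n - k0 - 2 = m := by omega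
  have hKm : k0 + 2 ≤ m := by omega
  -- the key single-term alpha bound
  have halpha : 3 * 2 ^ (m - 2) ≤ alpha (k0 + 1) m := by
    apply alpha_lower (by omega) (by omega)
    calc 4 * m ≤ 4 * n := by omega
      _ ≤ 4 * 2 ^ c := by omega
      _ = 2 ^ (k0 + 1) := by rw [show (4:ℕ) = 2 ^ 2 from rfl, ← pow_add]; congr 1; omega
  -- sum is at least the k0 term
  have hmem : k0 ∈ Finset.Icc (c + 1) (n - 2) := by
    simp only [Finset.mem_Icc]
    omega
  have hnonneg : ∀ k ∈ Finset.Icc (c + 1) (n - 2),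
      0 ≤ ((k : ℝ) / 3 - 2) * (alpha (k + 1) (n - k - 2) : ℝ) := by
    intro k hk
    simp only [Finset.mem_Icc] at hk
    have hk13 : (13 : ℝ) ≤ (k : ℝ) := by exact_mod_cast (by omega : 13 ≤ k)
    have : (0:ℝ) ≤ (k : ℝ) / 3 - 2 := by linarith
    positivity
  refine le_trans ?_ (Finset.single_le_sum hnonneg hmem)
  rw [hmk]
  -- real-number estimates
  have hn0 : (0:ℝ) < n := by
    have : (0:ℕ) < n := by omega
    exact_mod_cast this
  have hL : Real.log n ≤ (k0 : ℝ) := by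
    have h1 : Real.log n ≤ Real.log ((2:ℝ) ^ c) := by
      apply Real.log_le_log hn0
      exact_mod_cast hnpow
    have h2 : Real.log ((2:ℝ) ^ c) = c * Real.log 2 := by rw [Real.log_pow]
    have h3 : Real.log 2 ≤ 1 := by
      have := Real.log_two_lt_d9
      linarith
    have hc0 : (0:ℝ) ≤ c := by positivity
    calc Real.log n ≤ c * Real.log 2 := by rw [← h2]; exact h1
      _ ≤ c * 1 := by nlinarith
      _ ≤ (k0 : ℝ) := by push_cast [hk0]; linarith
  have hL0 : 0 ≤ Real.log n := Real.log_nonneg (by exact_mod_cast (by omega : 1 ≤ n))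
  have hpowsplit : (2:ℝ) ^ n = 2 ^ (m - 2) * 2 ^ (c + 5) := by
    rw [← pow_add]
    congr 1
    omega
  have hB : (2:ℝ) ^ (c + 5) ≤ 64 * n := by
    have : (2:ℕ) ^ (c + 5) ≤ 64 * n := by
      have : (2:ℕ) ^ (c + 5) = 32 * 2 ^ c := by rw [pow_add]; ring
      omega
    exact_mod_cast this
  have hA0 : (0:ℝ) < 2 ^ (m - 2) := by positivity
  have hαR : (3:ℝ) * 2 ^ (m - 2) ≤ (alpha (k0 + 1) m : ℝ) := by exact_mod_cast halpha
  have hk13 : (13:ℝ) ≤ (k0 : ℝ) := by exact_mod_cast (by omega : 13 ≤ k0)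
  have hfac : (0:ℝ) ≤ (k0:ℝ) / 3 - 2 := by linarith
  rw [div_le_iff₀ hn0]
  calc (1:ℝ) / 128 * 2 ^ n * Real.log n
      ≤ 1 / 128 * 2 ^ n * (k0 : ℝ) := by
        have h2n : (0:ℝ) ≤ 2 ^ n := by positivity
        nlinarith
    _ = 2 ^ (m - 2) * 2 ^ (c + 5) * (k0 : ℝ) / 128 := by rw [hpowsplit]; ring
    _ ≤ 2 ^ (m - 2) * (64 * n) * (k0 : ℝ) / 128 := by
        gcongr
    _ = ((k0:ℝ) / 6) * (3 * 2 ^ (m - 2)) * n := by ring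
    _ ≤ ((k0:ℝ) / 3 - 2) * (3 * 2 ^ (m - 2)) * n := by
        refine mul_le_mul_of_nonneg_right (mul_le_mul_of_nonneg_right ?_ (by positivity)) hn0.le
        linarith
    _ ≤ ((k0:ℝ) / 3 - 2) * (alpha (k0 + 1) m : ℝ) * n :=
        mul_le_mul_of_nonneg_right (mul_le_mul_of_nonneg_left hαR hfac) hn0.le
end
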